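/- arXiv:1808.04387 — 2 statements merged into one kernel-verified Lean document; each statement's English description precedes it below -/
import Mathlib

section
/- Let p be an odd prime and q ≥ 2 an integer, and suppose 2p = (q^d − 1)/(q − 1) for some integer d ≥ 2. Then d = 2 and 2p = q + 1. -/
/-- If p is an odd prime, q ≥ 2 and 2p = (q^d−1)/(q−1) with d ≥ 2, then
d = 2 and 2p = q + 1. -/
theorem stmt_8 (p q d : ℕ) (hp : p.Prime) (hodd : Odd p) (hq : 2 ≤ q) (hd : 2 ≤ d)
    (h : 2 * p = ∑ i ∈ Finset.range d, q ^ i) :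
    d = 2 ∧ 2 * p = q + 1 := by
  -- q must be odd
  have hq2 : q % 2 = 1 := by
    by_contra hqe
    have hq0 : q % 2 = 0 := by omega
    obtain ⟨n, rfl⟩ : ∃ n, d = n + 1 := ⟨d - 1, by omega⟩
    rw [geom_sum_succ] at h
    have hm := Nat.mul_mod q (∑ i ∈ Finset.range n, q ^ i) 2
    rw [hq0] at hm
    simp at hm
    omega
  have hpow : ∀ i, q ^ i % 2 = 1 := fun i => by
    rw [Nat.pow_mod, hq2, one_pow]; rfl
  have hsum : ∀ n, (∑ i ∈ Finset.range n, q ^ i) % 2 = n % 2 := by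
    intro n
    induction n with
    | zero => simp
    | succ k ih =>
      rw [Finset.sum_range_succ, Nat.add_mod, ih, hpow]
      omega
  have hdev : d % 2 = 0 := by
    have := hsum d
    omega
  obtain ⟨e, rfl⟩ : ∃ e, d = e + e := ⟨d / 2, by omega⟩
  have he1 : 1 ≤ e := by omega
  rcases eq_or_lt_of_le he1 with he | he
  · refine ⟨by omega, ?_⟩
    rw [h, ← he]
    simp [Finset.sum_range_succ]
    omega
  · -- e ≥ 2, derive a contradiction
    exfalso
    have he2 : 2 ≤ e := he
    have hsplit : ∑ i ∈ Finset.range (e + e), q ^ i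
        = (∑ i ∈ Finset.range e, q ^ i) * (1 + q ^ e) := by
      rw [Finset.sum_range_add]
      have : ∀ i, q ^ (e + i) = q ^ e * q ^ i := fun i => pow_add q e i
      simp only [this, ← Finset.mul_sum]
      ring
    set A := ∑ i ∈ Finset.range e, q ^ i with hA
    set B := 1 + q ^ e with hB
    rw [hsplit] at h
    have hAge : 1 + q ≤ A := by
      have : ∑ i ∈ Finset.range 2, q ^ i ≤ A := by
        apply Finset.sum_le_sum_of_subset
        exact Finset.range_subset_range.2 he2
      simpa [Finset.sum_range_succ] using this
    have hBge : 1 + q ^ 2 ≤ B := by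
      have : q ^ 2 ≤ q ^ e := Nat.pow_le_pow_right (by omega) he2
      omega
    have hq2' : 4 ≤ q ^ 2 := by nlinarith
    have hpd : p ∣ A * B := ⟨2, by omega⟩
    have hp0 : 0 < p := hp.pos
    rcases (Nat.Prime.dvd_mul hp).1 hpd with ⟨k, hk⟩ | ⟨k, hk⟩
    · rw [hk] at h
      have h2 : p * 2 = p * (B * k) := by rw [mul_comm p 2, h]; ring
      have h3 := Nat.eq_of_mul_eq_mul_left hp0 h2
      have hBd : B ∣ 2 := Dvd.intro k h3.symm
      have := Nat.le_of_dvd (by omega) hBd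
      omega
    · rw [hk] at h
      have h2 : p * 2 = p * (A * k) := by rw [mul_comm p 2, h]; ring
      have h3 := Nat.eq_of_mul_eq_mul_left hp0 h2
      have hAd : A ∣ 2 := Dvd.intro k h3.symm
      have := Nat.le_of_dvd (by omega) hAd
      nlinarith
end

section
/- Let G be a finite group acting faithfully on a finite set Ω such that all point stabilizers are maximal subgroups of G, and suppose B ⊆ Ω is a base for G (the pointwise stabilizer of B is trivial). Then there exists a maximal irredundant family of maximal subgroups of G of size at most |B|; in particular Mindim(G) ≤ b(G). -/
/-- If G acts faithfully with maximal point stabilizers and B is a base, then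
G has a maximal irredundant family of maximal subgroups of size at most |B|;
in particular Mindim(G) ≤ b(G). -/
theorem stmt_17 {G Ω : Type*} [Group G] [Finite G] [Finite Ω] [MulAction G Ω]
    (hfaith : ∀ g : G, (∀ ω : Ω, g • ω = ω) → g = 1)
    (hmax : ∀ ω : Ω, IsCoatom (MulAction.stabilizer G ω))
    (B : Finset Ω) (hB : ∀ g : G, (∀ ω ∈ B, g • ω = ω) → g = 1) :
    ∃ M : Finset (Subgroup G),
      (∀ H ∈ M, IsCoatom H) ∧
      (∀ N ⊂ M, N.inf id ≠ M.inf id) ∧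
      (∀ M' : Finset (Subgroup G), M ⊂ M' → (∀ H ∈ M', IsCoatom H) →
        ¬ (∀ N ⊂ M', N.inf id ≠ M'.inf id)) ∧
      M.card ≤ B.card := by
  classical
  set S : Finset (Subgroup G) := B.image (fun ω => MulAction.stabilizer G ω) with hS
  have hSinf : S.inf id = ⊥ := by
    apply le_antisymm _ bot_le
    intro g hg
    simp only [Subgroup.mem_bot]
    apply hB
    intro ω hω
    have h := Finset.inf_le (f := id) (Finset.mem_image_of_mem (fun ω => MulAction.stabilizer G ω) hω)
    exact h hg
  set T : Finset (Finset (Subgroup G)) :=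
    S.powerset.filter (fun N => N.inf id = ⊥) with hT
  have hST : S ∈ T := by
    simp [hT, hSinf]
  obtain ⟨N, hNT, hNmin⟩ := Finset.exists_min_image T Finset.card ⟨S, hST⟩
  have hNS : N ⊆ S := by
    have := (Finset.mem_filter.mp hNT).1
    exact Finset.mem_powerset.mp this
  have hNinf : N.inf id = ⊥ := (Finset.mem_filter.mp hNT).2
  refine ⟨N, ?_, ?_, ?_, ?_⟩
  · intro H hH
    obtain ⟨ω, _, rfl⟩ := Finset.mem_image.mp (hNS hH)
    exact hmax ω
  · intro N' hN' hinf
    rw [hNinf] at hinf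
    have hN'T : N' ∈ T := by
      refine Finset.mem_filter.mpr ⟨Finset.mem_powerset.mpr (hN'.1.trans hNS), hinf⟩
    have := hNmin N' hN'T
    exact absurd this (not_le.mpr (Finset.card_lt_card hN'))
  · intro M' hMM' _ hirr
    apply hirr N hMM'
    rw [hNinf]
    symm
    apply le_antisymm _ bot_le
    calc M'.inf id ≤ N.inf id := Finset.inf_mono hMM'.1
    _ = ⊥ := hNinf
  · calc N.card ≤ S.card := Finset.card_le_card hNS
    _ ≤ B.card := Finset.card_image_le
end
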